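/- For every n > 1, the matricially normed space \widehat{M}_n is not an L¹-space: it is not the case that ‖u_1 ⊕ … ⊕ u_k‖ = Σ_{j=1}^k ‖u_j‖ for all matrices u_1, …, u_k with entries in \widehat{M}_n (i.e., \widehat{M}_n fails to be simultaneously 1-convex and 1-concave). -/

import Mathlib

open scoped BigOperators
open Matrix

noncomputable section

/-- Block-diagonal sum `u ⊕ w` of two square matrices with entries in `E`. -/
def MatDSum {E : Type*} [Zero E] {m k : ℕ}
    (u : Matrix (Fin m) (Fin m) E) (w : Matrix (Fin k) (Fin k) E) :
    Matrix (Fin (m + k)) (Fin (m + k)) E :=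
  Matrix.reindex finSumFinEquiv finSumFinEquiv (Matrix.fromBlocks u 0 0 w)

/-- Left action `S·u` of a scalar matrix on an `E`-valued matrix. -/
def scalLeft {E : Type*} [AddCommMonoid E] [Module ℂ E] {m : ℕ}
    (S : Matrix (Fin m) (Fin m) ℂ) (u : Matrix (Fin m) (Fin m) E) :
    Matrix (Fin m) (Fin m) E :=
  Matrix.of fun i j => ∑ k, S i k • u k j

/-- Right action `u·S` of a scalar matrix on an `E`-valued matrix. -/
def scalRight {E : Type*} [AddCommMonoid E] [Module ℂ E] {m : ℕ}
    (u : Matrix (Fin m) (Fin m) E) (S : Matrix (Fin m) (Fin m) ℂ) :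
    Matrix (Fin m) (Fin m) E :=
  Matrix.of fun i j => ∑ k, S k j • u i k

/-- The operator norm `‖S‖_o` of a complex scalar matrix, i.e. its norm as an
operator on the euclidean (Hilbert) space `ℂⁿ`. -/
noncomputable def opNorm {m : ℕ} (S : Matrix (Fin m) (Fin m) ℂ) : ℝ :=
  ‖LinearMap.toContinuousLinearMap (Matrix.toEuclideanLin S)‖

/-- The `m`-th amplification of a map `φ : E → F`: apply `φ` entrywise. -/
def matAmpl {E F : Type*} (φ : E → F) {m : ℕ} (u : Matrix (Fin m) (Fin m) E) :
    Matrix (Fin m) (Fin m) F :=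
  Matrix.of fun i j => φ (u i j)

/-- The operator `φ^v : M_n → E`, `(λ_{ij}) ↦ Σ_{i,j} λ_{ji} • x_{ij}`, associated with
`v = (x_{ij}) ∈ M_n(E)`. -/
def matPhi {E : Type*} [AddCommMonoid E] [Module ℂ E] {n : ℕ}
    (v : Matrix (Fin n) (Fin n) E) (a : Matrix (Fin n) (Fin n) ℂ) : E :=
  ∑ i, ∑ j, a j i • v i j

/-- `ν` is a matrix-norm on the complex vector space `E`: each `ν m` is a norm on
`M_m(E)`, and Axioms 1 and 2 of Effros/Ruan hold. -/
def IsMatrixNorm {E : Type} [AddCommGroup E] [Module ℂ E]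
    (ν : ∀ m : ℕ, Matrix (Fin m) (Fin m) E → ℝ) : Prop :=
  (∀ (m : ℕ) (u v : Matrix (Fin m) (Fin m) E), ν m (u + v) ≤ ν m u + ν m v) ∧
  (∀ (m : ℕ) (c : ℂ) (u : Matrix (Fin m) (Fin m) E), ν m (c • u) = ‖c‖ * ν m u) ∧
  (∀ (m : ℕ) (u : Matrix (Fin m) (Fin m) E), ν m u = 0 ↔ u = 0) ∧
  (∀ (m k : ℕ) (u : Matrix (Fin m) (Fin m) E),
      ν (m + k) (MatDSum u (0 : Matrix (Fin k) (Fin k) E)) = ν m u) ∧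
  (∀ (m : ℕ) (S : Matrix (Fin m) (Fin m) ℂ) (u : Matrix (Fin m) (Fin m) E),
      ν m (scalLeft S u) ≤ opNorm S * ν m u) ∧
  (∀ (m : ℕ) (u : Matrix (Fin m) (Fin m) E) (S : Matrix (Fin m) (Fin m) ℂ),
      ν m (scalRight u S) ≤ ν m u * opNorm S)

/-- The set of values `‖(φ^v)_m(u)‖_m` over all proper couples `(E, v)`, i.e. over all
matricially normed spaces `E` and all `v` in the closed unit ball of `M_n(E)`. -/
def hatNormSet (n : ℕ) {m : ℕ}
    (u : Matrix (Fin m) (Fin m) (Matrix (Fin n) (Fin n) ℂ)) : Set ℝ :=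
  { r | ∃ (E : Type) (_ : AddCommGroup E) (_ : Module ℂ E)
        (ν : ∀ m' : ℕ, Matrix (Fin m') (Fin m') E → ℝ),
        IsMatrixNorm ν ∧
        ∃ v : Matrix (Fin n) (Fin n) E, ν n v ≤ 1 ∧ r = ν m (matAmpl (matPhi v) u) }

/-- The matrix-norm of the matricially normed space `M̂_n`:
`‖u‖_m = sup { ‖(φ^v)_m(u)‖_m : (E, v) a proper couple }`. -/
noncomputable def hatNorm (n : ℕ) {m : ℕ}
    (u : Matrix (Fin m) (Fin m) (Matrix (Fin n) (Fin n) ℂ)) : ℝ :=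
  sSup (hatNormSet n u)

/-- The iterated block-diagonal sum `u 0 ⊕ u 1 ⊕ … ⊕ u (k-1)` of a family of square
matrices with entries in `E` (of possibly different sizes). -/
def dSumFam {E : Type*} [Zero E] :
    ∀ (k : ℕ) (d : Fin k → ℕ),
      (∀ j, Matrix (Fin (d j)) (Fin (d j)) E) →
      Matrix (Fin (∑ j, d j)) (Fin (∑ j, d j)) E
  | 0, _, _ => 0
  | (k + 1), d, u =>
      Matrix.reindex (finCongr (Fin.sum_univ_succ d).symm)
        (finCongr (Fin.sum_univ_succ d).symm)
        (MatDSum (u 0) (dSumFam k (fun j => d j.succ) (fun j => u j.succ)))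

-- Frobenius matricial norm on E = ℂ, used to produce proper couples
namespace HatAux

lemma le_of_sq_le {a b : ℝ} (ha : 0 ≤ a) (hb : 0 ≤ b) (h : a^2 ≤ b^2) : a ≤ b := by nlinarith

def euc {m : ℕ} (y : Fin m → ℂ) : EuclideanSpace ℂ (Fin m) := (WithLp.equiv 2 _).symm y
@[simp] lemma euc_apply {m : ℕ} (y : Fin m → ℂ) (i : Fin m) : euc y i = y i := rfl
lemma euc_norm {m : ℕ} (y : Fin m → ℂ) : ‖euc y‖ = Real.sqrt (∑ i, ‖y i‖ ^ 2) := by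
  rw [EuclideanSpace.norm_eq]; simp [euc]

lemma mulVec_norm_le {m : ℕ} (S : Matrix (Fin m) (Fin m) ℂ) (x : EuclideanSpace ℂ (Fin m)) :
    ‖euc (S.mulVec x)‖ ≤ opNorm S * ‖x‖ :=
  (LinearMap.toContinuousLinearMap (Matrix.toEuclideanLin S)).le_opNorm x

lemma opNorm_le_bound {m : ℕ} (S : Matrix (Fin m) (Fin m) ℂ) (c : ℝ) (hc : 0 ≤ c)
    (h : ∀ x : EuclideanSpace ℂ (Fin m), ‖euc (S.mulVec x)‖ ≤ c * ‖x‖) : opNorm S ≤ c :=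
  ContinuousLinearMap.opNorm_le_bound _ hc h

lemma opNorm_nonneg' {m : ℕ} (S : Matrix (Fin m) (Fin m) ℂ) : 0 ≤ opNorm S := norm_nonneg _

section
open scoped Matrix.Norms.L2Operator
lemma opNorm_conjT {m : ℕ} (S : Matrix (Fin m) (Fin m) ℂ) : opNorm Sᴴ = opNorm S := by
  have h : ∀ T : Matrix (Fin m) (Fin m) ℂ, opNorm T = ‖T‖ := by
    intro T; rw [Matrix.l2_opNorm_def]; rfl
  rw [h, h, Matrix.l2_opNorm_conjTranspose]
end

lemma vecMul_norm_le {m : ℕ} (x : Fin m → ℂ) (S : Matrix (Fin m) (Fin m) ℂ) :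
    ‖euc (x ᵥ* S)‖ ≤ opNorm S * ‖euc x‖ := by
  have h1 : x ᵥ* S = star (Sᴴ *ᵥ star x) := by
    rw [Matrix.star_mulVec, Matrix.conjTranspose_conjTranspose, star_star]
  have hstar : ∀ y : Fin m → ℂ, ‖euc (star y)‖ = ‖euc y‖ := by
    intro y; rw [euc_norm, euc_norm]
    congr 1; exact Finset.sum_congr rfl fun i _ => by simp
  calc ‖euc (x ᵥ* S)‖ = ‖euc (Sᴴ *ᵥ star x)‖ := by rw [h1, hstar]
    _ ≤ opNorm Sᴴ * ‖euc (star x)‖ := mulVec_norm_le Sᴴ (euc (star x))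
    _ = opNorm S * ‖euc x‖ := by rw [opNorm_conjT, hstar]

/-- the Frobenius (Hilbert–Schmidt) norm on matrices over `ℂ`, as a euclidean norm -/
def eucM {m : ℕ} (u : Matrix (Fin m) (Fin m) ℂ) : EuclideanSpace ℂ (Fin m × Fin m) :=
  (WithLp.equiv 2 _).symm (fun p => u p.1 p.2)

def frob (m : ℕ) (u : Matrix (Fin m) (Fin m) ℂ) : ℝ := ‖eucM u‖

lemma frob_nonneg {m : ℕ} (u : Matrix (Fin m) (Fin m) ℂ) : 0 ≤ frob m u := norm_nonneg _

lemma frob_eq {m : ℕ} (u : Matrix (Fin m) (Fin m) ℂ) :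
    frob m u = Real.sqrt (∑ i, ∑ j, ‖u i j‖ ^ 2) := by
  rw [frob, EuclideanSpace.norm_eq]
  congr 1
  have h : ∀ i : Fin m × Fin m, ‖eucM u i‖^2 = ‖u i.1 i.2‖^2 := fun _ => rfl
  rw [Finset.sum_congr rfl (fun i _ => h i), Fintype.sum_prod_type]

lemma frob_sq {m : ℕ} (u : Matrix (Fin m) (Fin m) ℂ) :
    (frob m u)^2 = ∑ i, ∑ j, ‖u i j‖ ^ 2 := by
  rw [frob_eq, Real.sq_sqrt (by positivity)]

lemma isMatrixNorm_frob : IsMatrixNorm frob := by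
  refine ⟨?_, ?_, ?_, ?_, ?_, ?_⟩
  · intro m u v
    have h : eucM (u + v) = eucM u + eucM v := rfl
    rw [frob, h]; exact norm_add_le _ _
  · intro m c u
    have h : eucM (c • u) = c • eucM u := rfl
    rw [frob, h, norm_smul]; rfl
  · intro m u
    rw [frob, norm_eq_zero]
    constructor
    · intro h; ext i j; exact congrArg (fun x => x (i, j)) h
    · rintro rfl; rfl
  · intro m k u
    rw [frob_eq, frob_eq]
    congr 1
    calc (∑ i, ∑ j, ‖(MatDSum u (0 : Matrix (Fin k) (Fin k) ℂ)) i j‖ ^ 2)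
        = ∑ p : Fin m ⊕ Fin k, ∑ q : Fin m ⊕ Fin k, ‖Matrix.fromBlocks u 0 0 0 p q‖ ^ 2 := by
          rw [← Equiv.sum_comp finSumFinEquiv
            (fun i => ∑ j, ‖(MatDSum u (0 : Matrix (Fin k) (Fin k) ℂ)) i j‖ ^ 2)]
          refine Finset.sum_congr rfl fun p _ => ?_
          rw [← Equiv.sum_comp finSumFinEquiv
            (fun j => ‖(MatDSum u (0 : Matrix (Fin k) (Fin k) ℂ)) (finSumFinEquiv p) j‖ ^ 2)]
          refine Finset.sum_congr rfl fun q _ => ?_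
          simp [MatDSum]
      _ = ∑ a : Fin m, ∑ b : Fin m, ‖u a b‖ ^ 2 := by
          simp [Fintype.sum_sum_type]
  · intro m S u
    refine le_of_sq_le (frob_nonneg _) (mul_nonneg (opNorm_nonneg' S) (frob_nonneg _)) ?_
    rw [mul_pow, frob_sq, frob_sq, Finset.sum_comm,
      Finset.sum_comm (f := fun i j => ‖u i j‖^2), Finset.mul_sum]
    refine Finset.sum_le_sum fun j _ => ?_
    have hcol : (fun i => scalLeft S u i j) = S *ᵥ (fun i => u i j) := by
      funext i; simp [scalLeft, Matrix.mulVec, dotProduct, smul_eq_mul]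
    have hb : ‖euc (S *ᵥ (fun i => u i j))‖ ≤ opNorm S * ‖euc (fun i => u i j)‖ :=
      mulVec_norm_le S (euc (fun i => u i j))
    have h1 : ∑ i, ‖scalLeft S u i j‖^2 = ‖euc (S *ᵥ (fun i => u i j))‖^2 := by
      rw [euc_norm, Real.sq_sqrt (by positivity)]
      exact Finset.sum_congr rfl fun i _ => by rw [congrFun hcol i]
    have h2 : ‖euc (fun i => u i j)‖^2 = ∑ i, ‖u i j‖^2 := by
      rw [euc_norm, Real.sq_sqrt (by positivity)]
    rw [h1, ← h2]
    calc ‖euc (S *ᵥ (fun i => u i j))‖^2 ≤ (opNorm S * ‖euc (fun i => u i j)‖)^2 := by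
          have hn : (0:ℝ) ≤ ‖euc (S *ᵥ (fun i => u i j))‖ := norm_nonneg _
          nlinarith [hb, hn]
      _ = opNorm S^2 * ‖euc (fun i => u i j)‖^2 := by ring
  · intro m u S
    refine le_of_sq_le (frob_nonneg _) (mul_nonneg (frob_nonneg _) (opNorm_nonneg' S)) ?_
    rw [mul_pow, frob_sq, frob_sq, Finset.sum_mul]
    refine Finset.sum_le_sum fun i _ => ?_
    have hrow : (fun j => scalRight u S i j) = (fun k => u i k) ᵥ* S := by
      funext j; simp [scalRight, Matrix.vecMul, dotProduct, smul_eq_mul, mul_comm]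
    have hb := vecMul_norm_le (fun k => u i k) S
    have h1 : ∑ j, ‖scalRight u S i j‖^2 = ‖euc ((fun k => u i k) ᵥ* S)‖^2 := by
      rw [euc_norm, Real.sq_sqrt (by positivity)]
      exact Finset.sum_congr rfl fun j _ => by rw [congrFun hrow j]
    have h2 : ‖euc (fun k => u i k)‖^2 = ∑ j, ‖u i j‖^2 := by
      rw [euc_norm, Real.sq_sqrt (by positivity)]
    rw [h1, ← h2]
    calc ‖euc ((fun k => u i k) ᵥ* S)‖^2 ≤ (opNorm S * ‖euc (fun k => u i k)‖)^2 := by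
          nlinarith [hb, norm_nonneg (euc ((fun k => u i k) ᵥ* S))]
      _ = ‖euc (fun k => u i k)‖^2 * opNorm S^2 := by ring

lemma norm_coord_le {m : ℕ} (x : EuclideanSpace ℂ (Fin m)) (i : Fin m) : ‖x i‖ ≤ ‖x‖ := by
  rw [EuclideanSpace.norm_eq]
  refine le_of_sq_le (norm_nonneg _) (Real.sqrt_nonneg _) ?_
  rw [Real.sq_sqrt (by positivity)]
  exact Finset.single_le_sum (f := fun j => ‖x j‖^2) (fun j _ => by positivity) (Finset.mem_univ i)

lemma pair_sq_le {m : ℕ} (x : EuclideanSpace ℂ (Fin m)) {i j : Fin m} (hij : i ≠ j) :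
    ‖x i‖^2 + ‖x j‖^2 ≤ ‖x‖^2 := by
  rw [EuclideanSpace.norm_eq, Real.sq_sqrt (by positivity)]
  calc ‖x i‖^2 + ‖x j‖^2 = ∑ k ∈ ({i, j} : Finset (Fin m)), ‖x k‖^2 := by
        rw [Finset.sum_pair hij]
    _ ≤ ∑ k, ‖x k‖^2 := Finset.sum_le_sum_of_subset_of_nonneg (Finset.subset_univ _)
        (fun k _ _ => by positivity)

lemma mulVec_std_apply {m : ℕ} (a b : Fin m) (c : ℂ) (x : Fin m → ℂ) (i : Fin m) :
    (Matrix.single a b c).mulVec x i = if i = a then c * x b else 0 := by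
  rw [single_mulVec, Function.update_apply]; simp

lemma opNorm_std_le {m : ℕ} (a b : Fin m) {c : ℂ} (hc : ‖c‖ ≤ 1) :
    opNorm (Matrix.single a b c) ≤ 1 := by
  refine opNorm_le_bound _ _ zero_le_one fun x => ?_
  rw [euc_norm, one_mul]
  have h1 : ∑ i, ‖(Matrix.single a b c).mulVec x i‖^2 = ‖c * x b‖^2 := by
    simp only [mulVec_std_apply, apply_ite (‖·‖), norm_zero,
      zero_pow (two_ne_zero), ite_pow]
    rw [Finset.sum_ite_eq' Finset.univ a (fun _ => ‖c * x b‖^2)]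
    simp
  rw [h1]
  have : ‖c * x b‖ ≤ ‖x‖ := by
    rw [norm_mul]
    calc ‖c‖ * ‖x b‖ ≤ 1 * ‖x b‖ := by gcongr
      _ = ‖x b‖ := one_mul _
      _ ≤ ‖x‖ := norm_coord_le x b
  calc Real.sqrt (‖c * x b‖^2) = ‖c * x b‖ := Real.sqrt_sq (norm_nonneg _)
    _ ≤ ‖x‖ := this

/-- `‖E_{d0,d0} + ε E_{d1,d1}‖ ≤ 1` for `‖ε‖ ≤ 1`. -/
lemma opNorm_diagpair_le {m : ℕ} {d0 d1 : Fin m} (hne : d0 ≠ d1) {c : ℂ} (hc : ‖c‖ ≤ 1) :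
    opNorm (Matrix.single d0 d0 1 + Matrix.single d1 d1 c) ≤ 1 := by
  refine opNorm_le_bound _ _ zero_le_one fun x => ?_
  rw [euc_norm, one_mul]
  have hentry : ∀ i, (Matrix.single d0 d0 1 + Matrix.single d1 d1 c).mulVec x i
      = (if i = d0 then x d0 else 0) + (if i = d1 then c * x d1 else 0) := by
    intro i
    rw [add_mulVec, Pi.add_apply, mulVec_std_apply, mulVec_std_apply, one_mul]
  have h1 : ∑ i, ‖(Matrix.single d0 d0 1 + Matrix.single d1 d1 c).mulVec x i‖^2
      = ‖x d0‖^2 + ‖c * x d1‖^2 := by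
    have : ∀ i, ‖(Matrix.single d0 d0 1 + Matrix.single d1 d1 c).mulVec x i‖^2
        = (if i = d0 then ‖x d0‖^2 else 0) + (if i = d1 then ‖c * x d1‖^2 else 0) := by
      intro i
      rw [hentry i]
      by_cases h0 : i = d0
      · subst h0
        rw [if_pos rfl, if_neg hne, if_pos rfl, if_neg hne, add_zero, add_zero]
      · rw [if_neg h0]
        by_cases h1 : i = d1
        · subst h1
          simp [h0]
        · rw [if_neg h1, if_neg h0, if_neg h1, add_zero, add_zero, norm_zero]
          exact zero_pow (two_ne_zero)
    rw [Finset.sum_congr rfl fun i _ => this i, Finset.sum_add_distrib,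
      Finset.sum_ite_eq' Finset.univ d0 (fun _ => ‖x d0‖^2),
      Finset.sum_ite_eq' Finset.univ d1 (fun _ => ‖c * x d1‖^2)]
    simp
  rw [h1]
  refine le_of_sq_le (Real.sqrt_nonneg _) (norm_nonneg _) ?_
  rw [Real.sq_sqrt (by positivity)]
  have hc2 : ‖c * x d1‖^2 ≤ ‖x d1‖^2 := by
    rw [norm_mul]
    have hcc : ‖c‖^2 ≤ 1 := by nlinarith [norm_nonneg c]
    nlinarith [hcc, sq_nonneg ‖x d1‖, norm_nonneg (x d1)]
  calc ‖x d0‖^2 + ‖c * x d1‖^2 ≤ ‖x d0‖^2 + ‖x d1‖^2 := by linarith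
    _ ≤ ‖x‖^2 := pair_sq_le x hne

/-- `‖E_{d0,d0} + ε E_{d0,d1}‖ ≤ √2` for `‖ε‖ ≤ 1`. -/
lemma opNorm_rowpair_le {m : ℕ} {d0 d1 : Fin m} (hne : d0 ≠ d1) {c : ℂ} (hc : ‖c‖ ≤ 1) :
    opNorm (Matrix.single d0 d0 1 + Matrix.single d0 d1 c) ≤ Real.sqrt 2 := by
  refine opNorm_le_bound _ _ (Real.sqrt_nonneg 2) fun x => ?_
  rw [euc_norm]
  have h1 : ∑ i, ‖(Matrix.single d0 d0 1 + Matrix.single d0 d1 c).mulVec x i‖^2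
      = ‖x d0 + c * x d1‖^2 := by
    have : ∀ i, ‖(Matrix.single d0 d0 1 + Matrix.single d0 d1 c).mulVec x i‖^2
        = if i = d0 then ‖x d0 + c * x d1‖^2 else 0 := by
      intro i
      rw [add_mulVec, Pi.add_apply, mulVec_std_apply, mulVec_std_apply, one_mul]
      by_cases h0 : i = d0 <;> simp [h0]
    rw [Finset.sum_congr rfl fun i _ => this i,
      Finset.sum_ite_eq' Finset.univ d0 (fun _ => ‖x d0 + c * x d1‖^2)]
    simp
  rw [h1]
  refine le_of_sq_le (Real.sqrt_nonneg _) (by positivity) ?_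
  rw [Real.sq_sqrt (by positivity), mul_pow, Real.sq_sqrt (by norm_num : (0:ℝ) ≤ 2)]
  have h2 : ‖x d0 + c * x d1‖ ≤ ‖x d0‖ + ‖x d1‖ := by
    calc ‖x d0 + c * x d1‖ ≤ ‖x d0‖ + ‖c * x d1‖ := norm_add_le _ _
      _ ≤ ‖x d0‖ + ‖x d1‖ := by
          rw [norm_mul]
          nlinarith [norm_nonneg (x d1), norm_nonneg c, hc]
  have h3 := pair_sq_le x hne
  nlinarith [norm_nonneg (x d0 + c * x d1), norm_nonneg (x d0), norm_nonneg (x d1),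
    sq_nonneg (‖x d0‖ - ‖x d1‖), h2, h3]

end HatAux
section AbstractCouple

variable {E : Type} [AddCommGroup E] [Module ℂ E] {ν : ∀ m : ℕ, Matrix (Fin m) (Fin m) E → ℝ}

lemma nu_zero (hν : IsMatrixNorm ν) (m : ℕ) : ν m 0 = 0 := (hν.2.2.1 m 0).2 rfl

lemma nu_nonneg (hν : IsMatrixNorm ν) (m : ℕ) (u : Matrix (Fin m) (Fin m) E) : 0 ≤ ν m u := by
  have h1 := hν.1 m u ((-1 : ℂ) • u)
  have h2 : u + (-1 : ℂ) • u = 0 := by simp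
  have h3 : ν m ((-1 : ℂ) • u) = ν m u := by
    rw [hν.2.1 m (-1) u]; simp
  rw [h2, nu_zero hν] at h1
  linarith

/-- Axiom 1 up to transport along `m + k = N`: if `w` looks like `u ⊕ 0` then `ν N w = ν m u`. -/
lemma nu_block (hν : IsMatrixNorm ν) (m k N : ℕ) (h : m + k = N)
    (u : Matrix (Fin m) (Fin m) E) (w : Matrix (Fin N) (Fin N) E)
    (hw : ∀ i j : Fin N, w i j =
      if h' : (i : ℕ) < m ∧ (j : ℕ) < m then u ⟨i, h'.1⟩ ⟨j, h'.2⟩ else 0) :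
    ν N w = ν m u := by
  subst h
  have hweq : w = MatDSum u (0 : Matrix (Fin k) (Fin k) E) := by
    ext i j
    rw [hw i j]
    show _ = (Matrix.fromBlocks u 0 0 0) (finSumFinEquiv.symm i) (finSumFinEquiv.symm j)
    rcases hi : finSumFinEquiv.symm i with a | a <;> rcases hj : finSumFinEquiv.symm j with b | b
    · have hi' : i = finSumFinEquiv (Sum.inl a) := by rw [← hi, Equiv.apply_symm_apply]
      have hj' : j = finSumFinEquiv (Sum.inl b) := by rw [← hj, Equiv.apply_symm_apply]
      subst hi'; subst hj'
      have hia : ((finSumFinEquiv (Sum.inl a) : Fin (m + k)) : ℕ) = (a : ℕ) := by simp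
      have hjb : ((finSumFinEquiv (Sum.inl b) : Fin (m + k)) : ℕ) = (b : ℕ) := by simp
      rw [dif_pos (by rw [hia, hjb]; exact ⟨a.isLt, b.isLt⟩)]
      simp only [Matrix.fromBlocks_apply₁₁]
      congr 1 <;> ext <;> simp
    · have hj' : j = finSumFinEquiv (Sum.inr b) := by rw [← hj, Equiv.apply_symm_apply]
      subst hj'
      rw [dif_neg (by simp)]
      simp
    · have hi' : i = finSumFinEquiv (Sum.inr a) := by rw [← hi, Equiv.apply_symm_apply]
      subst hi'
      rw [dif_neg (by simp)]
      simp
    · have hi' : i = finSumFinEquiv (Sum.inr a) := by rw [← hi, Equiv.apply_symm_apply]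
      subst hi'
      rw [dif_neg (by simp)]
      simp
  rw [hweq]
  exact hν.2.2.2.1 m k u

end AbstractCouple
section AbstractCouple2

variable {E : Type} [AddCommGroup E] [Module ℂ E] {ν : ∀ m : ℕ, Matrix (Fin m) (Fin m) E → ℝ}
variable {n : ℕ}

lemma sum_std_smul_col (a b : Fin n) (c : ℂ) (x : Fin n → E) (j : Fin n) :
    (∑ k, (Matrix.single a b c) k j • x k) = if b = j then c • x a else 0 := by
  by_cases hbj : b = j
  · subst hbj
    rw [if_pos rfl]
    have h : ∀ k, (Matrix.single a b c) k b • x k = if a = k then c • x k else 0 := by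
      intro k
      simp only [Matrix.single, Matrix.of_apply]
      by_cases hak : a = k <;> simp [hak]
    rw [Finset.sum_congr rfl fun k _ => h k, Finset.sum_ite_eq Finset.univ a fun k => c • x k]
    simp
  · rw [if_neg hbj]
    refine Finset.sum_eq_zero fun k _ => ?_
    simp only [Matrix.single, Matrix.of_apply]
    rw [if_neg (by tauto), zero_smul]

lemma sum_std_smul_row (a b : Fin n) (c : ℂ) (x : Fin n → E) (i : Fin n) :
    (∑ k, (Matrix.single a b c) i k • x k) = if a = i then c • x b else 0 := by
  by_cases hai : a = i
  · subst hai
    rw [if_pos rfl]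
    have h : ∀ k, (Matrix.single a b c) a k • x k = if b = k then c • x k else 0 := by
      intro k
      simp only [Matrix.single, Matrix.of_apply]
      by_cases hbk : b = k <;> simp [hbk]
    rw [Finset.sum_congr rfl fun k _ => h k, Finset.sum_ite_eq Finset.univ b fun k => c • x k]
    simp
  · rw [if_neg hai]
    refine Finset.sum_eq_zero fun k _ => ?_
    simp only [Matrix.single, Matrix.of_apply]
    rw [if_neg (by tauto), zero_smul]

/-- In any matricially normed space, an entry of `v` has norm at most `ν n v`. -/
lemma entry_bound (hν : IsMatrixNorm ν) (hn : 0 < n) (v : Matrix (Fin n) (Fin n) E)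
    (p q : Fin n) : ν 1 ![![v p q]] ≤ ν n v := by
  set i0 : Fin n := ⟨0, hn⟩ with hi0
  set A : Matrix (Fin n) (Fin n) ℂ := Matrix.single i0 p 1 with hA
  set B : Matrix (Fin n) (Fin n) ℂ := Matrix.single q i0 1 with hB
  set w := scalLeft A (scalRight v B) with hwdef
  have hBcol : ∀ i j, scalRight v B i j = if i0 = j then v i q else 0 := by
    intro i j
    show (∑ k, B k j • v i k) = _
    rw [hB, sum_std_smul_col q i0 1 (fun k => v i k) j]
    simp
  have hw : ∀ i j, w i j = if i0 = i ∧ i0 = j then v p q else 0 := by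
    intro i j
    show (∑ k, A i k • (scalRight v B) k j) = _
    rw [hA, sum_std_smul_row i0 p 1 (fun k => scalRight v B k j) i]
    by_cases h1 : i0 = i
    · rw [if_pos h1, one_smul, hBcol p j]
      by_cases h2 : i0 = j
      · rw [if_pos h2, if_pos ⟨h1, h2⟩]
      · rw [if_neg h2, if_neg (by tauto)]
    · rw [if_neg h1, if_neg (by tauto)]
  have hval0 : (i0 : ℕ) = 0 := rfl
  have hkey : ν n w = ν 1 ![![v p q]] := by
    refine nu_block hν 1 (n - 1) n (by omega) _ w fun i j => ?_
    rw [hw i j]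
    have hii : ∀ i' : Fin n, (i0 = i') ↔ ((i' : ℕ) < 1) := by
      intro i'
      constructor
      · intro h; rw [← h, hval0]; omega
      · intro h; exact Fin.ext (by rw [hval0]; omega)
    by_cases hc : (i : ℕ) < 1 ∧ (j : ℕ) < 1
    · rw [dif_pos hc, if_pos ⟨(hii i).2 hc.1, (hii j).2 hc.2⟩]
      simp
    · rw [dif_neg hc, if_neg fun hand => hc ⟨(hii i).1 hand.1, (hii j).1 hand.2⟩]
  have hstep1 : ν n w ≤ opNorm A * ν n (scalRight v B) := hν.2.2.2.2.1 n A _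
  have hstep2 : ν n (scalRight v B) ≤ ν n v * opNorm B := hν.2.2.2.2.2 n v B
  have hAle : opNorm A ≤ 1 := HatAux.opNorm_std_le i0 p (le_of_eq norm_one)
  have hBle : opNorm B ≤ 1 := HatAux.opNorm_std_le q i0 (le_of_eq norm_one)
  have h0 : 0 ≤ ν n (scalRight v B) := nu_nonneg hν n _
  have h0v : 0 ≤ ν n v := nu_nonneg hν n v
  rw [← hkey]
  nlinarith [HatAux.opNorm_nonneg' A, HatAux.opNorm_nonneg' B]
end AbstractCouple2
section AbstractCouple3

variable {E : Type} [AddCommGroup E] [Module ℂ E] {ν : ∀ m : ℕ, Matrix (Fin m) (Fin m) E → ℝ}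
variable {n : ℕ}

/-- The key universal estimate: for any matricially normed space and any
`v ∈ M_n(E)`, the diagonal matrix `diag(v₀₀, v₁₀)` built from two entries of the
same column of `v` has norm at most `√2 · ν n v`. -/
lemma diag_bound (hν : IsMatrixNorm ν) (hn : 1 < n) (v : Matrix (Fin n) (Fin n) E) :
    ν 2 !![v ⟨0, by omega⟩ ⟨0, by omega⟩, 0; 0, v ⟨1, hn⟩ ⟨0, by omega⟩]
      ≤ Real.sqrt 2 * ν n v := by
  have hn0 : 0 < n := by omega
  set i0 : Fin n := ⟨0, hn0⟩ with hi0def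
  set i1 : Fin n := ⟨1, hn⟩ with hi1def
  have hv0 : (i0 : ℕ) = 0 := rfl
  have hv1 : (i1 : ℕ) = 1 := rfl
  have hne : i0 ≠ i1 := Fin.ne_of_val_ne (by omega)
  set D : Matrix (Fin 2) (Fin 2) E := !![v i0 i0, 0; 0, v i1 i0] with hD
  -- scalar matrices
  set Ap : Matrix (Fin n) (Fin n) ℂ :=
    Matrix.single i0 i0 (1:ℂ) + Matrix.single i1 i1 (1:ℂ) with hAp
  set Am : Matrix (Fin n) (Fin n) ℂ :=
    Matrix.single i0 i0 (1:ℂ) + Matrix.single i1 i1 (-1:ℂ) with hAm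
  set Bp : Matrix (Fin n) (Fin n) ℂ :=
    Matrix.single i0 i0 (1:ℂ) + Matrix.single i0 i1 (1:ℂ) with hBp
  set Bm : Matrix (Fin n) (Fin n) ℂ :=
    Matrix.single i0 i0 (1:ℂ) + Matrix.single i0 i1 (-1:ℂ) with hBm
  -- entries of the right multiples
  have hRB : ∀ (c : ℂ) (i j : Fin n),
      scalRight v (Matrix.single i0 i0 (1:ℂ) + Matrix.single i0 i1 c) i j
        = (if i0 = j then v i i0 else 0) + (if i1 = j then c • v i i0 else 0) := by
    intro c i j
    simp only [scalRight, Matrix.of_apply]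
    have h : ∀ k, ((Matrix.single i0 i0 (1:ℂ) + Matrix.single i0 i1 c :
          Matrix (Fin n) (Fin n) ℂ)) k j • v i k
        = (Matrix.single i0 i0 (1:ℂ)) k j • v i k
          + (Matrix.single i0 i1 c) k j • v i k := by
      intro k; rw [Matrix.add_apply, add_smul]
    rw [Finset.sum_congr rfl fun k _ => h k, Finset.sum_add_distrib,
      sum_std_smul_col i0 i0 1 (fun k => v i k) j, sum_std_smul_col i0 i1 c (fun k => v i k) j]
    simp
  -- entries of the two products
  have hL : ∀ (c : ℂ) (u' : Matrix (Fin n) (Fin n) E) (i j : Fin n),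
      scalLeft (Matrix.single i0 i0 (1:ℂ) + Matrix.single i1 i1 c) u' i j
        = (if i0 = i then u' i0 j else 0) + (if i1 = i then c • u' i1 j else 0) := by
    intro c u' i j
    simp only [scalLeft, Matrix.of_apply]
    have h : ∀ k, ((Matrix.single i0 i0 (1:ℂ) + Matrix.single i1 i1 c :
          Matrix (Fin n) (Fin n) ℂ)) i k • u' k j
        = (Matrix.single i0 i0 (1:ℂ)) i k • u' k j
          + (Matrix.single i1 i1 c) i k • u' k j := by
      intro k; rw [Matrix.add_apply, add_smul]
    rw [Finset.sum_congr rfl fun k _ => h k, Finset.sum_add_distrib,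
      sum_std_smul_row i0 i0 1 (fun k => u' k j) i, sum_std_smul_row i1 i1 c (fun k => u' k j) i]
    simp
  set w : Matrix (Fin n) (Fin n) E :=
    scalLeft Ap (scalRight v Bp) + scalLeft Am (scalRight v Bm) with hwdef
  have hw : ∀ i j : Fin n, w i j =
      if i0 = i ∧ i0 = j then (2 : ℂ) • v i0 i0
      else if i1 = i ∧ i1 = j then (2 : ℂ) • v i1 i0 else 0 := by
    intro i j
    have : w i j = scalLeft Ap (scalRight v Bp) i j + scalLeft Am (scalRight v Bm) i j :=
      Matrix.add_apply _ _ _ _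
    rw [this, hAp, hAm, hL 1 _ i j, hL (-1) _ i j, hBp, hBm, hRB 1 i0 j, hRB 1 i1 j,
      hRB (-1) i0 j, hRB (-1) i1 j]
    have hI : i0 = i ∨ i1 = i ∨ (¬i0 = i ∧ ¬i1 = i) := by tauto
    have hJ : i0 = j ∨ i1 = j ∨ (¬i0 = j ∧ ¬i1 = j) := by tauto
    rcases hI with h1 | h1 | ⟨h1, h2⟩ <;> rcases hJ with h3 | h3 | ⟨h3, h4⟩
    · simp [← h1, ← h3, hne, hne.symm, two_smul]
    · simp [← h1, ← h3, hne, hne.symm]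
    · simp [← h1, h3, h4, hne, hne.symm]
    · simp [← h1, ← h3, hne, hne.symm]
    · simp [← h1, ← h3, hne, hne.symm, two_smul]
    · simp [← h1, h3, h4, hne, hne.symm]
    · simp [h1, h2, ← h3, hne, hne.symm]
    · simp [h1, h2, ← h3, hne, hne.symm]
    · simp [h1, h2, h3, h4]
  have hD2 : ∀ a b : Fin 2, ((2 : ℂ) • D) a b =
      if (a : ℕ) = 0 ∧ (b : ℕ) = 0 then (2 : ℂ) • v i0 i0
      else if (a : ℕ) = 1 ∧ (b : ℕ) = 1 then (2 : ℂ) • v i1 i0 else 0 := by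
    intro a b
    fin_cases a <;> fin_cases b <;> simp [hD]
  have hkey : ν n w = ν 2 ((2 : ℂ) • D) := by
    refine nu_block hν 2 (n - 2) n (by omega) _ w fun i j => ?_
    rw [hw i j]
    by_cases hc : (i : ℕ) < 2 ∧ (j : ℕ) < 2
    · rw [dif_pos hc, hD2]
      have hii0 : (i0 = i) ↔ ((i : ℕ) = 0) :=
        ⟨fun h => by rw [← h, hv0], fun h => Fin.ext (by rw [hv0, h])⟩
      have hii1 : (i1 = i) ↔ ((i : ℕ) = 1) :=
        ⟨fun h => by rw [← h, hv1], fun h => Fin.ext (by rw [hv1, h])⟩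
      have hjj0 : (i0 = j) ↔ ((j : ℕ) = 0) :=
        ⟨fun h => by rw [← h, hv0], fun h => Fin.ext (by rw [hv0, h])⟩
      have hjj1 : (i1 = j) ↔ ((j : ℕ) = 1) :=
        ⟨fun h => by rw [← h, hv1], fun h => Fin.ext (by rw [hv1, h])⟩
      by_cases c1 : (i : ℕ) = 0 ∧ (j : ℕ) = 0
      · rw [if_pos c1, if_pos ⟨hii0.2 c1.1, hjj0.2 c1.2⟩]
      · rw [if_neg c1, if_neg (fun h => c1 ⟨hii0.1 h.1, hjj0.1 h.2⟩)]
        by_cases c2 : (i : ℕ) = 1 ∧ (j : ℕ) = 1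
        · rw [if_pos c2, if_pos ⟨hii1.2 c2.1, hjj1.2 c2.2⟩]
        · rw [if_neg c2, if_neg (fun h => c2 ⟨hii1.1 h.1, hjj1.1 h.2⟩)]
    · rw [dif_neg hc]
      have hni : ¬(i0 = i ∧ i0 = j) := by
        rintro ⟨rfl, rfl⟩; exact hc ⟨by omega, by omega⟩
      have hni' : ¬(i1 = i ∧ i1 = j) := by
        rintro ⟨rfl, rfl⟩; exact hc ⟨by omega, by omega⟩
      rw [if_neg hni, if_neg hni']
  -- norm estimates
  have hsq2 : (0:ℝ) ≤ Real.sqrt 2 := Real.sqrt_nonneg 2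
  have hb1 : ν n (scalLeft Ap (scalRight v Bp)) ≤ Real.sqrt 2 * ν n v := by
    have s1 : ν n (scalLeft Ap (scalRight v Bp)) ≤ opNorm Ap * ν n (scalRight v Bp) :=
      hν.2.2.2.2.1 n Ap _
    have s2 : ν n (scalRight v Bp) ≤ ν n v * opNorm Bp := hν.2.2.2.2.2 n v Bp
    have sA : opNorm Ap ≤ 1 := HatAux.opNorm_diagpair_le hne (le_of_eq norm_one)
    have sB : opNorm Bp ≤ Real.sqrt 2 := HatAux.opNorm_rowpair_le hne (le_of_eq norm_one)
    have h0 : 0 ≤ ν n (scalRight v Bp) := nu_nonneg hν n _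
    have h0v : 0 ≤ ν n v := nu_nonneg hν n v
    nlinarith [HatAux.opNorm_nonneg' Ap, HatAux.opNorm_nonneg' Bp]
  have hb2 : ν n (scalLeft Am (scalRight v Bm)) ≤ Real.sqrt 2 * ν n v := by
    have s1 : ν n (scalLeft Am (scalRight v Bm)) ≤ opNorm Am * ν n (scalRight v Bm) :=
      hν.2.2.2.2.1 n Am _
    have s2 : ν n (scalRight v Bm) ≤ ν n v * opNorm Bm := hν.2.2.2.2.2 n v Bm
    have sA : opNorm Am ≤ 1 := HatAux.opNorm_diagpair_le hne (by rw [norm_neg, norm_one])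
    have sB : opNorm Bm ≤ Real.sqrt 2 := HatAux.opNorm_rowpair_le hne (by rw [norm_neg, norm_one])
    have h0 : 0 ≤ ν n (scalRight v Bm) := nu_nonneg hν n _
    have h0v : 0 ≤ ν n v := nu_nonneg hν n v
    nlinarith [HatAux.opNorm_nonneg' Am, HatAux.opNorm_nonneg' Bm]
  have htri : ν n w ≤ ν n (scalLeft Ap (scalRight v Bp)) + ν n (scalLeft Am (scalRight v Bm)) :=
    hν.1 n _ _
  have hsmul : ν 2 ((2 : ℂ) • D) = 2 * ν 2 D := by
    rw [hν.2.1 2 2 D]; norm_num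
  have : (2:ℝ) * ν 2 D ≤ 2 * (Real.sqrt 2 * ν n v) := by
    rw [← hsmul, ← hkey]; linarith
  linarith

end AbstractCouple3
section PhiComputations

variable {E : Type} [AddCommGroup E] [Module ℂ E] {n : ℕ}

lemma matPhi_zero (v : Matrix (Fin n) (Fin n) E) : matPhi v (0 : Matrix (Fin n) (Fin n) ℂ) = 0 := by
  simp [matPhi]

lemma matPhi_std (v : Matrix (Fin n) (Fin n) E) (p q : Fin n) :
    matPhi v (Matrix.single p q (1 : ℂ)) = v q p := by
  unfold matPhi
  have h : ∀ i j : Fin n, (Matrix.single p q (1 : ℂ)) j i • v i j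
      = if q = i then (if p = j then v i j else 0) else 0 := by
    intro i j
    simp only [Matrix.single, Matrix.of_apply]
    by_cases h1 : q = i <;> by_cases h2 : p = j <;> simp [h1, h2]
  rw [Finset.sum_congr rfl fun i _ => Finset.sum_congr rfl fun j _ => h i j]
  have h2 : ∀ i : Fin n, (∑ j, if q = i then (if p = j then v i j else 0) else 0)
      = if q = i then v i p else 0 := by
    intro i
    by_cases hqi : q = i
    · simp only [hqi, if_true]
      rw [Finset.sum_ite_eq Finset.univ p (fun j => v i j)]
      simp
    · simp [hqi]
  rw [Finset.sum_congr rfl fun i _ => h2 i, Finset.sum_ite_eq Finset.univ q (fun i => v i p)]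
  simp

end PhiComputations

section MainProof

/-- membership in `hatNormSet` via the Frobenius couple on `E = ℂ`. -/
lemma frob_mem_hatNormSet (n : ℕ) {m : ℕ} (u : Matrix (Fin m) (Fin m) (Matrix (Fin n) (Fin n) ℂ))
    (v : Matrix (Fin n) (Fin n) ℂ) (hv : HatAux.frob n v ≤ 1) :
    HatAux.frob m (matAmpl (matPhi v) u) ∈ hatNormSet n u :=
  ⟨ℂ, inferInstance, inferInstance, HatAux.frob, HatAux.isMatrixNorm_frob, v, hv, rfl⟩

lemma frob_std_eq_one {n : ℕ} (hn : 0 < n) (p q : Fin n) :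
    HatAux.frob n (Matrix.single p q (1 : ℂ)) = 1 := by
  rw [HatAux.frob_eq]
  have h : ∀ i j : Fin n, ‖(Matrix.single p q (1:ℂ)) i j‖^2
      = if p = i then (if q = j then 1 else 0) else 0 := by
    intro i j
    simp only [Matrix.single, Matrix.of_apply]
    by_cases h1 : p = i <;> by_cases h2 : q = j <;> simp [h1, h2]
  rw [Finset.sum_congr rfl fun i _ => Finset.sum_congr rfl fun j _ => h i j]
  have h2 : ∀ i : Fin n, (∑ j, if p = i then (if q = j then (1:ℝ) else 0) else 0)
      = if p = i then 1 else 0 := by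
    intro i
    by_cases hpi : p = i
    · simp [hpi]
    · simp [hpi]
  rw [Finset.sum_congr rfl fun i _ => h2 i, Finset.sum_ite_eq Finset.univ p (fun _ => (1:ℝ))]
  simp

lemma frob_one_one (x : ℂ) : HatAux.frob 1 ![![x]] = ‖x‖ := by
  refine (HatAux.frob_eq _).trans ?_
  simp [Fin.sum_univ_succ]

/-- `matAmpl` of a 1×1 matrix. -/
lemma matAmpl_one {n : ℕ} {F : Type} (φ : Matrix (Fin n) (Fin n) ℂ → F)
    (a : Matrix (Fin n) (Fin n) ℂ) : matAmpl φ ![![a]] = ![![φ a]] := by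
  ext i j
  fin_cases i <;> fin_cases j <;> rfl

/-- Upper bound of 1 on all elements of `hatNormSet n ![![Matrix.single p q 1]]`. -/
lemma hatNormSet_std_le (n : ℕ) (hn : 0 < n) (p q : Fin n) :
    ∀ r ∈ hatNormSet n ![![Matrix.single p q (1:ℂ)]], r ≤ 1 := by
  rintro r ⟨E, _, _, ν, hν, v, hv, rfl⟩
  have h1 : matAmpl (matPhi v) ![![Matrix.single p q (1:ℂ)]] = ![![v q p]] := by
    rw [matAmpl_one, matPhi_std]
  rw [h1]
  exact le_trans (entry_bound hν hn v q p) hv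

lemma hatNorm_std_ge_one (n : ℕ) (hn : 0 < n) (p q : Fin n) :
    1 ≤ hatNorm n ![![Matrix.single p q (1:ℂ)]] := by
  have hmem := frob_mem_hatNormSet n ![![Matrix.single p q (1:ℂ)]]
    (Matrix.single q p (1:ℂ)) (le_of_eq (frob_std_eq_one hn q p))
  have hval : HatAux.frob 1 (matAmpl (matPhi (Matrix.single q p (1:ℂ)))
      ![![Matrix.single p q (1:ℂ)]]) = 1 := by
    rw [matAmpl_one, matPhi_std, frob_one_one]
    simp [Matrix.single]
  rw [hval] at hmem
  exact le_csSup ⟨1, fun r hr => hatNormSet_std_le n hn p q r hr⟩ hmem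

end MainProof

/-- **Proposition 14.** For `n > 1`, the matricially normed space `M̂_n` is not an
`L¹`-space: it is not the case that `‖u_1 ⊕ … ⊕ u_k‖ = Σ_j ‖u_j‖` for all matrices
`u_1, …, u_k` with entries in `M̂_n` (i.e. `M̂_n` fails to be simultaneously `1`-convex
and `1`-concave). -/
theorem hatMn_not_L1 (n : ℕ) (hn : 1 < n) :
    ¬ ∀ (k : ℕ) (d : Fin k → ℕ)
        (u : ∀ j, Matrix (Fin (d j)) (Fin (d j)) (Matrix (Fin n) (Fin n) ℂ)),
        hatNorm n (dSumFam k d u) = ∑ j, hatNorm n (u j) := by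
  intro H
  have hn0 : 0 < n := by omega
  set i0 : Fin n := ⟨0, hn0⟩ with hi0
  set i1 : Fin n := ⟨1, hn⟩ with hi1
  set a : Matrix (Fin n) (Fin n) ℂ := Matrix.single i0 i0 (1:ℂ) with ha
  set b : Matrix (Fin n) (Fin n) ℂ := Matrix.single i0 i1 (1:ℂ) with hb
  have h := H 2 (fun _ => 1) ![![![a]], ![![b]]]
  -- identify the direct sum with an explicit 2×2 matrix
  have hW : dSumFam 2 (fun _ => 1) ![![![a]], ![![b]]]
      = (!![a, 0; 0, b] : Matrix (Fin 2) (Fin 2) (Matrix (Fin n) (Fin n) ℂ)) := by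
    ext i j
    fin_cases i <;> fin_cases j <;> rfl
  -- upper bound √2 on the hat-norm of the direct sum
  have hub : hatNorm n (dSumFam 2 (fun _ => 1) ![![![a]], ![![b]]]) ≤ Real.sqrt 2 := by
    refine Real.sSup_le ?_ (Real.sqrt_nonneg 2)
    rintro r ⟨E, _, _, ν, hν, v, hv, rfl⟩
    show ν 2 (matAmpl (matPhi v) (dSumFam 2 (fun _ => 1) ![![![a]], ![![b]]])) ≤ Real.sqrt 2
    have hmat : matAmpl (matPhi v) (dSumFam 2 (fun _ => 1) ![![![a]], ![![b]]])
        = !![v i0 i0, 0; 0, v i1 i0] := by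
      have hW' : ∀ i j : Fin 2,
          (dSumFam 2 (fun _ => 1) ![![![a]], ![![b]]]) i j = !![a, 0; 0, b] i j :=
        fun i j => congrFun (congrFun hW i) j
      ext i j
      show matPhi v ((dSumFam 2 (fun _ => 1) ![![![a]], ![![b]]]) i j) = _
      rw [hW' i j]
      fin_cases i <;> fin_cases j
      · exact matPhi_std v i0 i0
      · exact matPhi_zero v
      · exact matPhi_zero v
      · exact matPhi_std v i0 i1
    refine (congrArg (ν 2) hmat).trans_le ?_
    have hd := diag_bound hν hn v
    have hnn : ν n v ≤ 1 := hv
    calc ν 2 !![v i0 i0, 0; 0, v i1 i0] ≤ Real.sqrt 2 * ν n v := hd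
      _ ≤ Real.sqrt 2 * 1 := by
          have := nu_nonneg hν n v
          nlinarith [Real.sqrt_nonneg 2]
      _ = Real.sqrt 2 := mul_one _
  -- lower bound 2 on the sum of hat-norms
  have hra : 1 ≤ hatNorm n ![![a]] := hatNorm_std_ge_one n hn0 i0 i0
  have hrb : 1 ≤ hatNorm n ![![b]] := hatNorm_std_ge_one n hn0 i0 i1
  have hsum : (∑ j : Fin 2, hatNorm n ((![![![a]], ![![b]]] :
      Fin 2 → Matrix (Fin 1) (Fin 1) (Matrix (Fin n) (Fin n) ℂ)) j))
      = hatNorm n ![![a]] + hatNorm n ![![b]] := by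
    rw [Fin.sum_univ_two]
    rfl
  have h2 : Real.sqrt 2 < 2 := by
    nlinarith [Real.sq_sqrt (show (0:ℝ) ≤ 2 by norm_num), Real.sqrt_nonneg 2]
  rw [hsum] at h
  linarith
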